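/- There exists an absolute constant $C$ such that for every sequence $\{a_k,\ k\ge0\}$ of real numbers and every positive integer $n$, $\Big|\sum_{h=0}^{n} 2^{-n}\binom{n}{h}\, a_h\Big| \le \frac{C}{\sqrt n}\,\max_{0\le \ell\le n}\big|A_\ell\big|$, where $A_\ell=\sum_{k=0}^{\ell} a_k$. -/

import Mathlib

open Finset Real

lemma aux_choose_succ_le {n i : ℕ} (h : n / 2 ≤ i) (h2 : i < n) :
    n.choose (i + 1) ≤ n.choose i := by
  rcases lt_or_ge (n - i - 1) (n / 2) with hj | hj
  · calc n.choose (i + 1) = n.choose (n - (i + 1)) := (Nat.choose_symm (by omega)).symm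
      _ ≤ n.choose (n - (i + 1) + 1) := Nat.choose_le_succ_of_lt_half_left (by omega)
      _ = n.choose i := by
          rw [show n - (i + 1) + 1 = n - i by omega, Nat.choose_symm (by omega)]
  · have hi : i + 1 = n - i := by omega
    rw [hi, Nat.choose_symm (by omega)]

lemma aux_centralBinom_sqrt (m : ℕ) :
    (Nat.centralBinom m : ℝ) * Real.sqrt (2 * m + 1) ≤ 4 ^ m := by
  induction m with
  | zero => simp
  | succ m ih =>
    have key : ((m : ℝ) + 1) * Nat.centralBinom (m + 1)
        = 2 * (2 * m + 1) * Nat.centralBinom m := by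
      exact_mod_cast congrArg (Nat.cast (R := ℝ)) (Nat.succ_mul_centralBinom_succ m)
    push_cast
    set s1 := Real.sqrt (2 * (m : ℝ) + 1) with hs1def
    set s3 := Real.sqrt (2 * ((m : ℝ) + 1) + 1) with hs3def
    have hs1 : s1 ^ 2 = 2 * m + 1 := Real.sq_sqrt (by positivity)
    have hs1nn : 0 ≤ s1 := Real.sqrt_nonneg _
    have hs3nn : 0 ≤ s3 := Real.sqrt_nonneg _
    have hcbnn : (0 : ℝ) ≤ Nat.centralBinom m := Nat.cast_nonneg _
    have hprod : s1 * s3 ≤ 2 * m + 2 := by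
      rw [hs1def, hs3def, ← Real.sqrt_mul (by positivity)]
      have h9 : ((2 * (m : ℝ) + 1) * (2 * ((m : ℝ) + 1) + 1)) ≤ (2 * (m : ℝ) + 2) ^ 2 := by
        nlinarith
      calc Real.sqrt ((2 * (m : ℝ) + 1) * (2 * ((m : ℝ) + 1) + 1))
          ≤ Real.sqrt ((2 * (m : ℝ) + 2) ^ 2) := Real.sqrt_le_sqrt h9
        _ = 2 * m + 2 := Real.sqrt_sq (by positivity)
    have hpos : (0 : ℝ) < m + 1 := by positivity
    rw [← mul_le_mul_iff_right₀ hpos]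
    calc ((m : ℝ) + 1) * ((Nat.centralBinom (m + 1) : ℝ) * s3)
        = 2 * ((Nat.centralBinom m : ℝ) * s1) * (s1 * s3) := by
          linear_combination s3 * key - 2 * (Nat.centralBinom m : ℝ) * s3 * hs1
      _ ≤ 2 * 4 ^ m * (2 * m + 2) := by
          have := mul_le_mul ih hprod (mul_nonneg hs1nn hs3nn) (by positivity)
          linarith
      _ = ((m : ℝ) + 1) * 4 ^ (m + 1) := by ring

lemma aux_middle_le (n : ℕ) (hn : 0 < n) :
    (n.choose (n / 2) : ℝ) / 2 ^ n ≤ 1 / Real.sqrt n := by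
  have hsn : (0 : ℝ) < Real.sqrt n := Real.sqrt_pos.mpr (by exact_mod_cast hn)
  rcases Nat.even_or_odd n with ⟨m, hm⟩ | ⟨m, hm⟩
  · subst hm
    have hcb : ((m + m).choose ((m + m) / 2) : ℝ) = (Nat.centralBinom m : ℝ) := by
      rw [Nat.centralBinom_eq_two_mul_choose]
      congr 2 <;> omega
    have h := aux_centralBinom_sqrt m
    have hcast : ((m + m : ℕ) : ℝ) = 2 * (m : ℝ) := by push_cast; ring
    rw [hcb, div_le_div_iff₀ (by positivity) hsn, hcast]
    have h2 : Real.sqrt (2 * (m : ℝ)) ≤ Real.sqrt (2 * (m : ℝ) + 1) := by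
      apply Real.sqrt_le_sqrt; linarith
    calc (Nat.centralBinom m : ℝ) * Real.sqrt (2 * (m : ℝ))
        ≤ (Nat.centralBinom m : ℝ) * Real.sqrt (2 * (m : ℝ) + 1) := by
          exact mul_le_mul_of_nonneg_left h2 (Nat.cast_nonneg _)
      _ ≤ 4 ^ m := h
      _ = 1 * 2 ^ (m + m) := by rw [one_mul, pow_add, ← mul_pow]; norm_num
  · subst hm
    have hdiv : (2 * m + 1) / 2 = m := by omega
    rw [hdiv]
    have hch : (2 * m + 1).choose m * 2 = Nat.centralBinom (m + 1) := by
      rw [Nat.centralBinom_eq_two_mul_choose, show 2 * (m + 1) = (2 * m + 1) + 1 by ring,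
        Nat.choose_succ_succ' (2 * m + 1) m, Nat.choose_symm_half]
      ring
    have hchR : ((2 * m + 1).choose m : ℝ) = (Nat.centralBinom (m + 1) : ℝ) / 2 := by
      rw [eq_div_iff (by norm_num : (2 : ℝ) ≠ 0)]
      exact_mod_cast hch
    have h := aux_centralBinom_sqrt (m + 1)
    have hcast : ((2 * m + 1 : ℕ) : ℝ) = 2 * (m : ℝ) + 1 := by push_cast; ring
    have hcast2 : ((m + 1 : ℕ) : ℝ) = (m : ℝ) + 1 := by push_cast; ring
    rw [hcast2] at h
    have h2 : Real.sqrt (2 * (m : ℝ) + 1) ≤ Real.sqrt (2 * ((m : ℝ) + 1) + 1) := by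
      apply Real.sqrt_le_sqrt; linarith
    rw [div_le_div_iff₀ (by positivity) hsn, hchR, hcast]
    calc (Nat.centralBinom (m + 1) : ℝ) / 2 * Real.sqrt (2 * (m : ℝ) + 1)
        ≤ (Nat.centralBinom (m + 1) : ℝ) / 2 * Real.sqrt (2 * ((m : ℝ) + 1) + 1) := by
          exact mul_le_mul_of_nonneg_left h2 (by positivity)
      _ ≤ 4 ^ (m + 1) / 2 := by
          rw [div_mul_eq_mul_div]
          gcongr
      _ = 1 * 2 ^ (2 * m + 1) := by
          rw [show (4 : ℝ) = 2 ^ 2 by norm_num, ← pow_mul,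
            show 2 * (m + 1) = (2 * m + 1) + 1 by ring, pow_succ]
          ring

lemma aux_TV (n : ℕ) :
    ∑ i ∈ Finset.range n, |(n.choose (i + 1) : ℝ) - n.choose i|
      ≤ 2 * n.choose (n / 2) := by
  rw [Finset.range_eq_Ico,
    ← Finset.sum_Ico_consecutive _ (Nat.zero_le (n / 2)) (Nat.div_le_self n 2),
    ← Finset.range_eq_Ico]
  have e1 : ∑ i ∈ Finset.range (n / 2), |(n.choose (i + 1) : ℝ) - n.choose i|
      = (n.choose (n / 2) : ℝ) - n.choose 0 := by
    rw [← Finset.sum_range_sub (fun i => (n.choose i : ℝ))]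
    apply Finset.sum_congr rfl
    intro i hi
    rw [abs_of_nonneg]
    simp only [sub_nonneg]
    exact_mod_cast Nat.choose_le_succ_of_lt_half_left (Finset.mem_range.mp hi)
  have e2 : ∑ i ∈ Finset.Ico (n / 2) n, |(n.choose (i + 1) : ℝ) - n.choose i|
      = (n.choose (n / 2) : ℝ) - n.choose n := by
    rw [Finset.sum_Ico_eq_sum_range]
    have hcg : ∀ i ∈ Finset.range (n - n / 2),
        |(n.choose (n / 2 + i + 1) : ℝ) - n.choose (n / 2 + i)|
          = (fun j => (n.choose (n / 2 + j) : ℝ)) i - (fun j => (n.choose (n / 2 + j) : ℝ)) (i + 1) := by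
      intro i hi
      have hilt := Finset.mem_range.mp hi
      have hle : (n.choose (n / 2 + i + 1) : ℝ) ≤ n.choose (n / 2 + i) := by
        exact_mod_cast aux_choose_succ_le (Nat.le_add_right _ _) (by omega)
      simp only
      rw [show n / 2 + (i + 1) = n / 2 + i + 1 by omega, abs_sub_comm,
        abs_of_nonneg (by linarith)]
    rw [Finset.sum_congr rfl hcg, Finset.sum_range_sub' (fun j => (n.choose (n / 2 + j) : ℝ))]
    simp [Nat.add_sub_cancel' (Nat.div_le_self n 2)]
  rw [e1, e2]
  have h0 : (0 : ℝ) ≤ n.choose 0 := Nat.cast_nonneg _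
  have h1 : (0 : ℝ) ≤ n.choose n := Nat.cast_nonneg _
  linarith

theorem euler_mean_le_max_partial_sums :
    ∃ C : ℝ, ∀ (a : ℕ → ℝ) (n : ℕ), 0 < n →
      |∑ h ∈ Finset.range (n + 1), (n.choose h : ℝ) / 2 ^ n * a h|
        ≤ C / Real.sqrt n *
            (Finset.range (n + 1)).sup' (Finset.nonempty_range_iff.mpr (Nat.succ_ne_zero n))
              (fun ℓ => |∑ k ∈ Finset.range (ℓ + 1), a k|) := by
  refine ⟨3, fun a n hn => ?_⟩
  set M := (Finset.range (n + 1)).sup' (Finset.nonempty_range_iff.mpr (Nat.succ_ne_zero n))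
      (fun ℓ => |∑ k ∈ Finset.range (ℓ + 1), a k|) with hMdef
  have hA : ∀ ℓ ∈ Finset.range (n + 1), |∑ k ∈ Finset.range (ℓ + 1), a k| ≤ M := by
    intro ℓ hℓ
    rw [hMdef]
    exact Finset.le_sup' (fun ℓ => |∑ k ∈ Finset.range (ℓ + 1), a k|) hℓ
  have hM0 : 0 ≤ M :=
    le_trans (abs_nonneg _) (hA 0 (Finset.mem_range.mpr (Nat.succ_pos n)))
  have habel := Finset.sum_range_by_parts (fun h => (n.choose h : ℝ) / 2 ^ n) a (n + 1)
  simp only [smul_eq_mul, Nat.add_sub_cancel] at habel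
  rw [habel]
  have hpow : (0 : ℝ) < 2 ^ n := by positivity
  -- bound the boundary term
  have hb1 : |(n.choose n : ℝ) / 2 ^ n * ∑ i ∈ Finset.range (n + 1), a i|
      ≤ (n.choose n : ℝ) / 2 ^ n * M := by
    rw [abs_mul, abs_of_nonneg (by positivity)]
    exact mul_le_mul_of_nonneg_left (hA n (Finset.self_mem_range_succ n)) (by positivity)
  -- bound the variation term
  have hb2 : |∑ i ∈ Finset.range n, ((n.choose (i + 1) : ℝ) / 2 ^ n - (n.choose i : ℝ) / 2 ^ n)
        * ∑ j ∈ Finset.range (i + 1), a j|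
      ≤ (2 * (n.choose (n / 2) : ℝ) / 2 ^ n) * M := by
    calc |∑ i ∈ Finset.range n, ((n.choose (i + 1) : ℝ) / 2 ^ n - (n.choose i : ℝ) / 2 ^ n)
          * ∑ j ∈ Finset.range (i + 1), a j|
        ≤ ∑ i ∈ Finset.range n, |((n.choose (i + 1) : ℝ) / 2 ^ n - (n.choose i : ℝ) / 2 ^ n)
          * ∑ j ∈ Finset.range (i + 1), a j| := Finset.abs_sum_le_sum_abs _ _
      _ ≤ ∑ i ∈ Finset.range n, |(n.choose (i + 1) : ℝ) / 2 ^ n - (n.choose i : ℝ) / 2 ^ n| * M := by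
          apply Finset.sum_le_sum
          intro i hi
          rw [abs_mul]
          exact mul_le_mul_of_nonneg_left
            (hA i (Finset.mem_range.mpr (by have := Finset.mem_range.mp hi; omega)))
            (abs_nonneg _)
      _ = (∑ i ∈ Finset.range n, |(n.choose (i + 1) : ℝ) - (n.choose i : ℝ)| / 2 ^ n) * M := by
          rw [Finset.sum_mul]
          apply Finset.sum_congr rfl
          intro i _
          congr 1
          rw [div_sub_div_same, abs_div, abs_of_pos hpow]
      _ ≤ (2 * (n.choose (n / 2) : ℝ) / 2 ^ n) * M := by
          apply mul_le_mul_of_nonneg_right _ hM0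
          rw [← Finset.sum_div]
          gcongr
          exact aux_TV n
  have hmid : (n.choose n : ℝ) ≤ n.choose (n / 2) := by
    exact_mod_cast Nat.choose_le_middle n n
  have hmle := aux_middle_le n hn
  calc |(n.choose n : ℝ) / 2 ^ n * ∑ i ∈ Finset.range (n + 1), a i
        - ∑ i ∈ Finset.range n, ((n.choose (i + 1) : ℝ) / 2 ^ n - (n.choose i : ℝ) / 2 ^ n)
          * ∑ j ∈ Finset.range (i + 1), a j|
      ≤ (n.choose n : ℝ) / 2 ^ n * M + (2 * (n.choose (n / 2) : ℝ) / 2 ^ n) * M :=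
        le_trans (abs_sub _ _) (add_le_add hb1 hb2)
    _ ≤ (n.choose (n / 2) : ℝ) / 2 ^ n * M + (2 * (n.choose (n / 2) : ℝ) / 2 ^ n) * M := by
        gcongr
    _ = 3 * ((n.choose (n / 2) : ℝ) / 2 ^ n) * M := by ring
    _ ≤ 3 * (1 / Real.sqrt n) * M := by gcongr
    _ = 3 / Real.sqrt n * M := by ring
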